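/- Let G be a small groupoid and let β be an extended inner automorphism of G in the category Grpd of small groupoids and functors. Then β is trivial: for every functor f : G → H, the automorphism β_f : H → H is the identity functor. Consequently, there are no non-trivial extended inner automorphisms in Grpd. -/

import Mathlib

open CategoryTheory

universe u

/-- An extended inner automorphism of a small groupoid `G` in the category `Grpd` of
small groupoids and homomorphisms (functors): a family of automorphisms
`β_f : H ⥤ H`, one for each functor `f : G ⥤ H`, such that
`β_{g ∘ f} ∘ g = g ∘ β_f` for all functors `f : G ⥤ H` and `g : H ⥤ K`. -/
structure ExtInnerGrpd (G : Type u) [Groupoid.{u} G] : Type (u + 1) where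
  app : ∀ (H : Type u) [Groupoid.{u} H], (G ⥤ H) → (H ⥤ H)
  iso : ∀ (H : Type u) [Groupoid.{u} H] (f : G ⥤ H),
    ∃ ginv : H ⥤ H, app H f ⋙ ginv = 𝟭 H ∧ ginv ⋙ app H f = 𝟭 H
  natural : ∀ (H K : Type u) [Groupoid.{u} H] [Groupoid.{u} K] (f : G ⥤ H) (g : H ⥤ K),
    app H f ⋙ g = g ⋙ app K (f ⋙ g)

/-- The groupoid `H` with a freshly adjoined duplicate `star` of the object `b`. -/
inductive Dup (H : Type u) (b : H) : Type u
  | of : H → Dup H b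
  | star : Dup H b

/-- Interpret an object of `Dup H b` back in `H`, sending `star` to `a`. -/
def Dup.proj {H : Type u} {b : H} (a : H) : Dup H b → H
  | .of x => x
  | .star => a

section DupCat

variable {H : Type u} [Groupoid.{u} H] {b : H}

instance : Groupoid.{u} (Dup H b) where
  Hom x y := Dup.proj b x ⟶ Dup.proj b y
  id x := 𝟙 (Dup.proj b x)
  comp f g := f ≫ g
  id_comp f := Category.id_comp f
  comp_id f := Category.comp_id f
  assoc f g h := Category.assoc f g h
  inv f := Groupoid.inv f
  inv_comp f := Groupoid.inv_comp f
  comp_inv f := Groupoid.comp_inv f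

/-- The inclusion `H ⥤ Dup H b`. -/
def Dup.ι : H ⥤ Dup H b where
  obj x := .of x
  map m := m
  map_id _ := rfl
  map_comp _ _ := rfl

/-- The comparison morphism used to define retractions from `Dup H b` to `H`. -/
def Dup.e {a : H} (w : a ⟶ b) : (x : Dup H b) → (Dup.proj a x ⟶ Dup.proj b x)
  | .of x => 𝟙 x
  | .star => w

/-- The retraction `Dup H b ⥤ H` which is the identity on `H`, sends `star` to `a`,
and sends the canonical morphism `star ⟶ of b` (i.e. `𝟙 b`) to `w`. -/
def Dup.s {a : H} (w : a ⟶ b) : Dup H b ⥤ H where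
  obj := Dup.proj a
  map {x y} m := Dup.e w x ≫ m ≫ Groupoid.inv (Dup.e w y)
  map_id x := by
    show Dup.e w x ≫ 𝟙 (Dup.proj b x) ≫ Groupoid.inv (Dup.e w x) = 𝟙 (Dup.proj a x)
    simp [Groupoid.inv_eq_inv]
  map_comp {x y z} f g := by
    show Dup.e w x ≫ (f ≫ g) ≫ Groupoid.inv (Dup.e w z) =
      (Dup.e w x ≫ f ≫ Groupoid.inv (Dup.e w y)) ≫ (Dup.e w y ≫ g ≫ Groupoid.inv (Dup.e w z))
    simp [Groupoid.inv_eq_inv]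

/-- The canonical morphism `star ⟶ of b` in `Dup H b`. -/
def Dup.u : (Dup.star : Dup H b) ⟶ Dup.of b := 𝟙 b

theorem Dup.ι_comp_s {a : H} (w : a ⟶ b) : (Dup.ι ⋙ Dup.s w : H ⥤ H) = 𝟭 H := by
  refine CategoryTheory.Functor.ext (fun x => rfl) (fun x y m => ?_)
  show Dup.e w (Dup.of x) ≫ m ≫ Groupoid.inv (Dup.e w (Dup.of y)) = _
  simp [Dup.e, Dup.proj, Dup.s, Dup.ι, Groupoid.inv_eq_inv]
  erw [eqToHom_refl, eqToHom_refl, Category.id_comp, Category.comp_id]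

theorem Dup.s_map_u {a : H} (w : a ⟶ b) : (Dup.s w).map Dup.u = w := by
  show Dup.e w Dup.star ≫ Dup.u ≫ Groupoid.inv (Dup.e w (Dup.of b)) = w
  simp [Dup.e, Dup.u, Groupoid.inv_eq_inv]
  erw [Category.id_comp, Groupoid.inv_eq_inv, IsIso.inv_id, Category.comp_id]

theorem Dup.s_map_star_of {a : H} (w : a ⟶ b) (v : (Dup.star : Dup H b) ⟶ Dup.of b) :
    (Dup.s w).map v = w ≫ v := by
  show Dup.e w Dup.star ≫ v ≫ Groupoid.inv (Dup.e w (Dup.of b)) = w ≫ v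
  simp [Dup.e, Dup.proj, Groupoid.inv_eq_inv]
  erw [Category.comp_id]

end DupCat

section Main

variable {G : Type u} [Groupoid.{u} G] (β : ExtInnerGrpd G)
variable {H : Type u} [Groupoid.{u} H] (f : G ⥤ H)

theorem nat_s {b a : H} (w : a ⟶ b) :
    β.app (Dup H b) (f ⋙ Dup.ι) ⋙ Dup.s w = Dup.s w ⋙ β.app H f := by
  have h := β.natural (Dup H b) H (f ⋙ Dup.ι) (Dup.s w)
  rwa [Functor.assoc, Dup.ι_comp_s, Functor.comp_id] at h

theorem of_fix (x : H) :
    (β.app (Dup H b) (f ⋙ Dup.ι)).obj (Dup.of x) = Dup.of ((β.app H f).obj x) := by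
  exact (Functor.congr_obj (β.natural H (Dup H b) f Dup.ι) x).symm

theorem star_fix (b : H) :
    (β.app (Dup H b) (f ⋙ Dup.ι)).obj Dup.star = Dup.star := by
  obtain ⟨γ, h1, h2⟩ := β.iso (Dup H b) (f ⋙ Dup.ι)
  have hsurj : (β.app (Dup H b) (f ⋙ Dup.ι)).obj (γ.obj Dup.star) = Dup.star := by
    simpa using Functor.congr_obj h2 Dup.star
  cases hz : γ.obj (Dup.star : Dup H b) with
  | of x =>
    rw [hz, of_fix] at hsurj
    exact absurd hsurj (by simp)
  | star =>
    rw [hz] at hsurj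
    exact hsurj

theorem obj_fix (h : H) : (β.app H f).obj h = h := by
  have hn := Functor.congr_obj (nat_s β f (𝟙 h)) Dup.star
  simp only [Functor.comp_obj] at hn
  rw [star_fix] at hn
  exact hn.symm

theorem map_heq {a b : H} (w : a ⟶ b) : HEq ((β.app H f).map w) w := by
  set K := Dup H b with hK
  set βF := β.app K (f ⋙ Dup.ι) with hβF
  have hstar : βF.obj Dup.star = Dup.star := star_fix β f b
  have hofb : βF.obj (Dup.of b) = Dup.of b := by
    rw [of_fix, obj_fix]
  set m' : (Dup.star : K) ⟶ Dup.of b :=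
    eqToHom hstar.symm ≫ βF.map Dup.u ≫ eqToHom hofb with hm'def
  have hmu : βF.map Dup.u = eqToHom hstar ≫ m' ≫ eqToHom hofb.symm := by
    simp [hm'def]
  -- first: m' = 𝟙 b, via the retraction sending u to 𝟙 b
  have h0 := Functor.hcongr_hom (nat_s β f (𝟙 b)) Dup.u
  simp only [Functor.comp_map, Dup.s_map_u] at h0
  rw [hmu] at h0
  simp only [Functor.map_comp, eqToHom_map] at h0
  rw [Dup.s_map_star_of] at h0
  -- h0 : HEq (eqToHom _ ≫ (𝟙 b ≫ m') ≫ eqToHom _) ((β.app H f).map (𝟙 b))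
  have hm1 : m' = 𝟙 b := by
    have h0' : HEq (m' : (Dup.star : K) ⟶ Dup.of b) ((β.app H f).map (𝟙 b)) := by
      simp only [eqToHom_comp_heq_iff, comp_eqToHom_heq_iff, heq_eqToHom_comp_iff,
        heq_comp_eqToHom_iff, Category.id_comp] at h0
      erw [Category.id_comp, comp_eqToHom_heq_iff] at h0
      exact h0
    rw [(β.app H f).map_id b, obj_fix β f b] at h0'
    exact eq_of_heq h0'
  -- second: extract β.map w, via the retraction sending u to w
  have hw := Functor.hcongr_hom (nat_s β f w) Dup.u
  simp only [Functor.comp_map, Dup.s_map_u] at hw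
  rw [hmu] at hw
  simp only [Functor.map_comp, eqToHom_map] at hw
  rw [Dup.s_map_star_of, hm1] at hw
  erw [Category.comp_id, eqToHom_comp_heq_iff, comp_eqToHom_heq_iff] at hw
  exact hw.symm

end Main

/-- There are no non-trivial extended inner automorphisms in `Grpd`: every extended
inner automorphism of a small groupoid `G` has all its components equal to the
identity functor. -/
theorem stmt0 (G : Type u) [Groupoid.{u} G] (β : ExtInnerGrpd G)
    (H : Type u) [Groupoid.{u} H] (f : G ⥤ H) :
    β.app H f = 𝟭 H := by
  refine Functor.hext (obj_fix β f) (fun a b w => ?_)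
  simpa using map_heq β f w
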